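/- arXiv:1807.03647 — 5 statements merged into one kernel-verified Lean document; each statement's English description precedes it below -/
import Mathlib

section
/- Let Ω ⊂ ℝ^d be a measurable set with finite Lebesgue measure 𝓛^d(Ω) < ∞. Let (u_n)_{n∈ℕ} be a sequence of integrable functions u_n : Ω → ℝ^m such that 𝓛^d( ⋂_{n∈ℕ} ⋃_{m ≥ n} { x ∈ Ω : |u_m(x) − u_n(x)| > 1 } ) = 0. Then there exist a subsequence (u_{n_j})_j and a nondecreasing, concave function ψ : [0,∞) → [0,∞) with ψ(t) → ∞ as t → ∞, such that sup_j ∫_Ω ψ(|u_{n_j}(x)|) dx < ∞. -/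
open MeasureTheory Filter Set
open scoped Topology ENNReal NNReal

section PsiAux

variable (T : ℕ → ℝ)

noncomputable def psi0 (t : ℝ) : ℝ := ∑' j : ℕ, min t (T (j+1)) / T (j+1)

variable {T}
variable (hT1 : ∀ j, 1 ≤ T j) (hTg : ∀ j, 2^(j+1) * T j ≤ T (j+1))

section
include hT1 hTg

lemma hTpos : ∀ j, (0:ℝ) < T j := fun j => lt_of_lt_of_le one_pos (hT1 j)

lemma hTpow : ∀ j, (2:ℝ)^(j+1) ≤ T (j+1) := by
  intro j
  calc (2:ℝ)^(j+1) = 2^(j+1) * 1 := by ring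
  _ ≤ 2^(j+1) * T j := by
      have := hT1 j
      have : (0:ℝ) < 2^(j+1) := by positivity
      nlinarith [hT1 j]
  _ ≤ T (j+1) := hTg j

lemma hTmono : Monotone T := by
  apply monotone_nat_of_le_succ
  intro j
  calc T j = 1 * T j := by ring
  _ ≤ 2^(j+1) * T j := by
      have h1 : (1:ℝ) ≤ 2^(j+1) := one_le_pow₀ (by norm_num : (1:ℝ) ≤ 2)
      nlinarith [hTpos hT1 hTg j]
  _ ≤ T (j+1) := hTg j

lemma psi0_summable (t : ℝ) : Summable (fun j : ℕ => min t (T (j+1)) / T (j+1)) := by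
  refine Summable.of_norm_bounded (g := fun j : ℕ => |t| * (2⁻¹:ℝ)^(j+1)) ?_ ?_
  · have : Summable (fun j : ℕ => (2⁻¹:ℝ)^(j+1)) := by
      have h := (summable_geometric_two : Summable fun n : ℕ => (1/2:ℝ)^n)
      simpa [pow_succ, one_div, mul_comm] using h.mul_right (2⁻¹:ℝ)
    exact this.mul_left _
  · intro j
    have hTp : (0:ℝ) < T (j+1) := hTpos hT1 hTg (j+1)
    have habs : |min t (T (j+1))| ≤ |t| := by
      rw [abs_le]
      constructor
      · exact le_min (neg_abs_le t) (le_trans (by simp [abs_nonneg]) hTp.le)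
      · exact min_le_of_left_le (le_abs_self t)
    have : ‖min t (T (j+1)) / T (j+1)‖ = |min t (T (j+1))| / T (j+1) := by
      rw [Real.norm_eq_abs, abs_div, abs_of_pos hTp]
    rw [this]
    calc |min t (T (j+1))| / T (j+1) ≤ |t| / T (j+1) := by
          exact div_le_div_of_nonneg_right habs hTp.le
    _ ≤ |t| * (2⁻¹:ℝ)^(j+1) := by
        rw [div_eq_mul_inv]
        apply mul_le_mul_of_nonneg_left _ (abs_nonneg t)
        rw [inv_pow]
        apply inv_anti₀ (by positivity) (hTpow hT1 hTg j)


lemma psi0_mono : Monotone (psi0 T) := by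
  intro s t hst
  apply Summable.tsum_le_tsum _ (psi0_summable hT1 hTg s) (psi0_summable hT1 hTg t)
  intro j
  exact div_le_div_of_nonneg_right (min_le_min_right _ hst) (hTpos hT1 hTg (j+1)).le

lemma psi0_nonneg {t : ℝ} (ht : 0 ≤ t) : 0 ≤ psi0 T t := by
  apply tsum_nonneg
  intro j
  exact div_nonneg (le_min ht (hTpos hT1 hTg (j+1)).le) (hTpos hT1 hTg (j+1)).le

lemma psi0_concave : ConcaveOn ℝ univ (psi0 T) := by
  refine ⟨convex_univ, ?_⟩
  intro x _ y _ a b ha hb hab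
  have hsx := psi0_summable hT1 hTg (T := T) x
  have hsy := psi0_summable hT1 hTg (T := T) y
  have h1 : a • psi0 T x + b • psi0 T y
      = ∑' j : ℕ, (a * (min x (T (j+1)) / T (j+1)) + b * (min y (T (j+1)) / T (j+1))) := by
    rw [Summable.tsum_add (hsx.mul_left a) (hsy.mul_left b), tsum_mul_left, tsum_mul_left]
    simp only [smul_eq_mul, psi0]
  rw [h1]
  apply Summable.tsum_le_tsum _ ((hsx.mul_left a).add (hsy.mul_left b))
    (psi0_summable hT1 hTg (a • x + b • y))
  intro j
  have hTp := hTpos hT1 hTg (j+1)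
  rw [show a * (min x (T (j+1)) / T (j+1)) + b * (min y (T (j+1)) / T (j+1))
      = (a * min x (T (j+1)) + b * min y (T (j+1))) / T (j+1) by ring]
  apply div_le_div_of_nonneg_right _ hTp.le
  apply le_min
  · have h2 : a * min x (T (j+1)) + b * min y (T (j+1)) ≤ a * x + b * y :=
      add_le_add (mul_le_mul_of_nonneg_left (min_le_left _ _) ha)
        (mul_le_mul_of_nonneg_left (min_le_left _ _) hb)
    simpa [smul_eq_mul] using h2
  · have h2 : a * min x (T (j+1)) + b * min y (T (j+1)) ≤ a * T (j+1) + b * T (j+1) :=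
      add_le_add (mul_le_mul_of_nonneg_left (min_le_right _ _) ha)
        (mul_le_mul_of_nonneg_left (min_le_right _ _) hb)
    calc a * min x (T (j+1)) + b * min y (T (j+1))
        ≤ a * T (j+1) + b * T (j+1) := h2
      _ = T (j+1) := by rw [← add_mul, hab, one_mul]

lemma psi0_lb (k : ℕ) : (k:ℝ) + 1 ≤ psi0 T (T (k+1)) := by
  have h : ∀ j ∈ Finset.range (k+1), min (T (k+1)) (T (j+1)) / T (j+1) = 1 := by
    intro j hj
    have hjk : j + 1 ≤ k + 1 := by
      simpa using Nat.succ_le_succ (Nat.lt_succ_iff.mp (Finset.mem_range.mp hj))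
    rw [min_eq_right (hTmono hT1 hTg hjk), div_self (hTpos hT1 hTg (j+1)).ne']
  calc (k:ℝ) + 1 = ∑ j ∈ Finset.range (k+1), min (T (k+1)) (T (j+1)) / T (j+1) := by
        rw [Finset.sum_congr rfl h]; simp
  _ ≤ psi0 T (T (k+1)) := by
      apply Summable.sum_le_tsum _ _ (psi0_summable hT1 hTg _)
      intro j _
      exact div_nonneg (le_min (hTpos hT1 hTg _).le (hTpos hT1 hTg _).le)
        (hTpos hT1 hTg (j+1)).le

lemma psi0_tendsto : Tendsto (psi0 T) atTop atTop := by
  apply tendsto_atTop_atTop.2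
  intro b
  refine ⟨T (⌈b⌉₊ + 1), fun t ht => ?_⟩
  calc b ≤ (⌈b⌉₊ : ℝ) + 1 := le_trans (Nat.le_ceil b) (by linarith)
  _ ≤ psi0 T (T (⌈b⌉₊ + 1)) := psi0_lb hT1 hTg _
  _ ≤ psi0 T t := psi0_mono hT1 hTg ht

lemma psi0_ofReal {t : ℝ} (ht : 0 ≤ t) :
    ENNReal.ofReal (psi0 T t)
      = ∑' j : ℕ, ENNReal.ofReal (min t (T (j+1)) / T (j+1)) := by
  apply ENNReal.ofReal_tsum_of_nonneg
  · intro j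
    exact div_nonneg (le_min ht (hTpos hT1 hTg (j+1)).le) (hTpos hT1 hTg (j+1)).le
  · exact psi0_summable hT1 hTg t

end
end PsiAux


noncomputable def Tseq (B : ℕ → ℝ) : ℕ → ℝ
  | 0 => max 1 (B 0)
  | (j+1) => max (2^(j+1) * Tseq B j) (B (j+1))

lemma Tseq_one_le (B : ℕ → ℝ) : ∀ j, 1 ≤ Tseq B j := by
  intro j
  induction j with
  | zero => exact le_max_left _ _
  | succ j ih =>
      have h2 : (1:ℝ) ≤ 2^(j+1) := one_le_pow₀ (by norm_num)
      have : (1:ℝ) ≤ 2^(j+1) * Tseq B j := by nlinarith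
      exact le_trans this (le_max_left _ _)

lemma Tseq_growth (B : ℕ → ℝ) : ∀ j, 2^(j+1) * Tseq B j ≤ Tseq B (j+1) :=
  fun j => le_max_left _ _

lemma Tseq_ge (B : ℕ → ℝ) : ∀ j, B j ≤ Tseq B j := by
  intro j
  cases j with
  | zero => exact le_max_right _ _
  | succ j => exact le_max_right _ _

/-- **Lemma 2.1 (concave function lemma).** If `Ω ⊆ ℝ^d` has finite Lebesgue measure and
`(u_n)` is a sequence of integrable functions `Ω → ℝ^m` such that the set
`⋂_n ⋃_{m ≥ n} {x ∈ Ω : |u_m(x) - u_n(x)| > 1}` is Lebesgue-negligible, then along a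
subsequence there is a nondecreasing concave `ψ : [0,∞) → [0,∞)` with `ψ(t) → ∞` such that
`sup_j ∫_Ω ψ(|u_{n_j}|) dx < ∞`. -/
theorem stmt0 {d m : ℕ} (Ω : Set (EuclideanSpace ℝ (Fin d)))
    (hΩmeas : MeasurableSet Ω) (hΩfin : volume Ω < ⊤)
    (u : ℕ → EuclideanSpace ℝ (Fin d) → EuclideanSpace ℝ (Fin m))
    (hint : ∀ n, IntegrableOn (u n) Ω)
    (hcond : volume (Ω ∩ ⋂ n, ⋃ m' ∈ Ici n, {x | ‖u m' x - u n x‖ > 1}) = 0) :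
    ∃ φ : ℕ → ℕ, StrictMono φ ∧ ∃ ψ : ℝ → ℝ,
      MonotoneOn ψ (Ici 0) ∧ ConcaveOn ℝ (Ici 0) ψ ∧ (∀ t ≥ (0:ℝ), 0 ≤ ψ t) ∧
      Tendsto ψ atTop atTop ∧
      ∃ C : ℝ, ∀ j, ∫ x in Ω, ψ ‖u (φ j) x‖ ≤ C := by
  classical
  set μ := (volume : Measure (EuclideanSpace ℝ (Fin d))) with hμ
  -- measurable representatives
  have hex : ∀ n, ∃ w : EuclideanSpace ℝ (Fin d) → EuclideanSpace ℝ (Fin m),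
      Measurable w ∧ u n =ᵐ[μ.restrict Ω] w := fun n =>
    ⟨(hint n).1.mk (u n), (hint n).1.stronglyMeasurable_mk.measurable, (hint n).1.ae_eq_mk⟩
  choose w hwm hwae using hex
  -- the bad sets, defined with w
  set bad : ℕ → Set (EuclideanSpace ℝ (Fin d)) :=
    fun n => Ω ∩ ⋃ m' ∈ Ici n, {x | 1 < ‖w m' x - w n x‖} with hbaddef
  have hbadmeas : ∀ n, MeasurableSet (bad n) := by
    intro n
    apply hΩmeas.inter
    apply MeasurableSet.iUnion
    intro m'
    apply MeasurableSet.iUnion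
    intro _
    exact measurableSet_lt measurable_const ((hwm m').sub (hwm n)).norm
  -- the exceptional null set where u ≠ w
  have hN : μ (⋃ n, Ω ∩ {x | u n x ≠ w n x}) = 0 := by
    apply measure_iUnion_null
    intro n
    have h1 : (μ.restrict Ω) {x | u n x ≠ w n x} = 0 := hwae n
    rw [Measure.restrict_apply' hΩmeas] at h1
    rw [inter_comm]
    exact h1
  have h0 : μ (⋂ n, bad n) = 0 := by
    apply le_antisymm _ zero_le
    have hsub : (⋂ n, bad n) ⊆
        (Ω ∩ ⋂ n, ⋃ m' ∈ Ici n, {x | ‖u m' x - u n x‖ > 1})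
          ∪ ⋃ n, Ω ∩ {x | u n x ≠ w n x} := by
      intro x hx
      by_cases hxN : x ∈ ⋃ n, Ω ∩ {x | u n x ≠ w n x}
      · exact Or.inr hxN
      · left
        have hxΩ : x ∈ Ω := (mem_iInter.mp hx 0).1
        have hux : ∀ n, u n x = w n x := by
          intro n
          by_contra hne
          exact hxN (mem_iUnion.mpr ⟨n, hxΩ, hne⟩)
        refine ⟨hxΩ, mem_iInter.mpr fun n => ?_⟩
        have := (mem_iInter.mp hx n).2
        simp only [mem_iUnion] at this ⊢
        obtain ⟨m', hm', hlt⟩ := this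
        exact ⟨m', hm', by simpa [hux] using hlt⟩
    calc μ (⋂ n, bad n) ≤ _ := measure_mono hsub
    _ ≤ μ (Ω ∩ ⋂ n, ⋃ m' ∈ Ici n, {x | ‖u m' x - u n x‖ > 1})
        + μ (⋃ n, Ω ∩ {x | u n x ≠ w n x}) := measure_union_le _ _
    _ = 0 := by rw [hcond, hN, add_zero]
  -- the decreasing sets D
  set D : ℕ → Set (EuclideanSpace ℝ (Fin d)) := fun k => ⋂ n ∈ Iic k, bad n with hDdef
  have hDmeas : ∀ k, MeasurableSet (D k) :=
    fun k => MeasurableSet.biInter (to_countable _) (fun n _ => hbadmeas n)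
  have hDanti : Antitone D := fun k k' hkk' =>
    biInter_subset_biInter_left (Iic_subset_Iic.mpr hkk')
  have hDsubΩ : ∀ k, D k ⊆ Ω := fun k =>
    le_trans (biInter_subset_of_mem (mem_Iic.mpr (Nat.zero_le k))) inter_subset_left
  have hDiInter : ⋂ k, D k = ⋂ n, bad n := by
    ext x
    simp only [mem_iInter, hDdef, mem_Iic]
    exact ⟨fun h n => h n n le_rfl, fun h k n _ => h n⟩
  have hDt : Tendsto (μ ∘ D) atTop (𝓝 0) := by
    have := tendsto_measure_iInter_atTop (μ := μ)
      (fun k => (hDmeas k).nullMeasurableSet) hDanti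
      ⟨0, ((measure_mono (hDsubΩ 0)).trans_lt hΩfin).ne⟩
    rwa [hDiInter, h0] at this
  -- choose the subsequence
  obtain ⟨φ, hφ, hφD⟩ : ∃ φ : ℕ → ℕ, StrictMono φ ∧ ∀ j, μ (D (φ j)) ≤ (2⁻¹)^j := by
    refine extraction_forall_of_eventually
      (P := fun j k => μ (D k) ≤ (2⁻¹:ℝ≥0∞)^j) (fun j => ?_)
    have hpos : (0:ℝ≥0∞) < (2⁻¹)^j := ENNReal.pow_pos (by norm_num) j
    exact (hDt.eventually_lt_const hpos).mono fun k hk => hk.le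
  -- the dominating functions g j
  set g : ℕ → EuclideanSpace ℝ (Fin d) → ℝ :=
    fun j x => 1 + ∑ n ∈ Finset.range (φ j + 1), ‖w n x‖ with hgdef
  have hgmeas : ∀ j, Measurable (g j) := by
    intro j
    apply Measurable.add measurable_const
    exact Finset.measurable_sum _ (fun n _ => (hwm n).norm)
  -- key pointwise estimate
  have hkey : ∀ i j x, x ∈ Ω → x ∉ D (φ j) → ‖w (φ i) x‖ ≤ g j x := by
    intro i j x hxΩ hxD
    simp only [hDdef, mem_iInter, mem_Iic, not_forall] at hxD
    obtain ⟨n, hn, hnbad⟩ := hxD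
    have hbound : ∀ m', n ≤ m' → ‖w m' x - w n x‖ ≤ 1 := by
      intro m' hm'
      by_contra hgt
      push_neg at hgt
      exact hnbad ⟨hxΩ, mem_iUnion.mpr ⟨m', mem_iUnion.mpr ⟨hm', hgt⟩⟩⟩
    have hsum_le : ∀ n' ∈ Finset.range (φ j + 1), ‖w n' x‖ ≤ g j x - 1 := by
      intro n' hn'
      simp only [hgdef]
      have : ∀ k ∈ Finset.range (φ j + 1), (0:ℝ) ≤ ‖w k x‖ := fun k _ => norm_nonneg _
      have h := Finset.single_le_sum this hn'
      linarith [h]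
    by_cases hcase : n ≤ φ i
    · have h1 : ‖w (φ i) x‖ ≤ ‖w n x‖ + 1 := by
        have := hbound (φ i) hcase
        have htri : ‖w (φ i) x‖ ≤ ‖w n x‖ + ‖w (φ i) x - w n x‖ := by
          have := norm_add_le (w n x) (w (φ i) x - w n x)
          simpa using this
        linarith
      have h2 : ‖w n x‖ ≤ g j x - 1 :=
        hsum_le n (Finset.mem_range.mpr (Nat.lt_succ_of_le hn))
      linarith
    · push_neg at hcase
      have h2 : ‖w (φ i) x‖ ≤ g j x - 1 :=
        hsum_le (φ i) (Finset.mem_range.mpr (Nat.lt_succ_of_le (le_trans hcase.le hn)))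
      linarith
  -- choose thresholds B j for g j
  have hBex : ∀ j, ∃ B : ℕ, μ (Ω ∩ {x | (B:ℝ) < g j x}) ≤ (2⁻¹)^j := by
    intro j
    set S : ℕ → Set (EuclideanSpace ℝ (Fin d)) := fun k => Ω ∩ {x | (k:ℝ) < g j x} with hSdef
    have hSmeas : ∀ k, MeasurableSet (S k) :=
      fun k => hΩmeas.inter (measurableSet_lt measurable_const (hgmeas j))
    have hSanti : Antitone S := by
      intro k k' hkk'
      apply inter_subset_inter_right
      intro x hx
      exact lt_of_le_of_lt ((Nat.cast_le (α := ℝ)).mpr hkk') hx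
    have hSempty : ⋂ k, S k = ∅ := by
      ext x
      simp only [mem_iInter, mem_empty_iff_false, iff_false, not_forall]
      obtain ⟨k, hk⟩ := exists_nat_gt (g j x)
      exact ⟨k, fun h => absurd h.2 (not_lt.mpr hk.le)⟩
    have hSt : Tendsto (μ ∘ S) atTop (𝓝 0) := by
      have := tendsto_measure_iInter_atTop (μ := μ)
        (fun k => (hSmeas k).nullMeasurableSet) hSanti
        ⟨0, ((measure_mono inter_subset_left).trans_lt hΩfin).ne⟩
      rwa [hSempty, measure_empty] at this
    have hpos : (0:ℝ≥0∞) < (2⁻¹)^j := ENNReal.pow_pos (by norm_num) j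
    obtain ⟨k, hk⟩ := (hSt.eventually_lt_const hpos).exists
    exact ⟨k, hk.le⟩
  choose B hB using hBex
  set T : ℕ → ℝ := Tseq (fun j => (B j : ℝ)) with hTdef
  have hT1 : ∀ j, 1 ≤ T j := Tseq_one_le _
  have hTg : ∀ j, 2^(j+1) * T j ≤ T (j+1) := Tseq_growth _
  have hTB : ∀ j, (B j : ℝ) ≤ T j := Tseq_ge _
  -- main measure estimate
  have hmeasb : ∀ i j, μ (Ω ∩ {x | T j < ‖w (φ i) x‖}) ≤ 2 * (2⁻¹)^j := by
    intro i j
    have hsub : Ω ∩ {x | T j < ‖w (φ i) x‖} ⊆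
        D (φ j) ∪ (Ω ∩ {x | (B j : ℝ) < g j x}) := by
      intro x ⟨hxΩ, hx⟩
      by_cases hxD : x ∈ D (φ j)
      · exact Or.inl hxD
      · right
        refine ⟨hxΩ, ?_⟩
        have := hkey i j x hxΩ hxD
        have := hTB j
        simp only [mem_setOf_eq] at hx ⊢
        linarith
    calc μ (Ω ∩ {x | T j < ‖w (φ i) x‖}) ≤ μ (D (φ j) ∪ (Ω ∩ {x | (B j : ℝ) < g j x})) :=
          measure_mono hsub
    _ ≤ μ (D (φ j)) + μ (Ω ∩ {x | (B j : ℝ) < g j x}) := measure_union_le _ _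
    _ ≤ (2⁻¹)^j + (2⁻¹)^j := add_le_add (hφD j) (hB j)
    _ = 2 * (2⁻¹)^j := (two_mul _).symm
  refine ⟨φ, hφ, psi0 T, (psi0_mono hT1 hTg).monotoneOn _,
    (psi0_concave hT1 hTg).subset (subset_univ _) (convex_Ici 0),
    fun t ht => psi0_nonneg hT1 hTg ht, psi0_tendsto hT1 hTg,
    (2 * (μ Ω + 2)).toReal, fun i => ?_⟩
  -- the integral bound
  have hvmeas : Measurable fun x => ‖w (φ i) x‖ := (hwm (φ i)).norm
  have hae : (fun x => psi0 T ‖u (φ i) x‖) =ᵐ[μ.restrict Ω]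
      (fun x => psi0 T ‖w (φ i) x‖) := by
    filter_upwards [hwae (φ i)] with x hx
    rw [hx]
  rw [integral_congr_ae hae]
  have hψmeas : Measurable (psi0 T) := (psi0_mono hT1 hTg).measurable
  have hnn : 0 ≤ᵐ[μ.restrict Ω] fun x => psi0 T ‖w (φ i) x‖ :=
    Filter.Eventually.of_forall fun x => psi0_nonneg hT1 hTg (norm_nonneg _)
  rw [integral_eq_lintegral_of_nonneg_ae hnn
    ((hψmeas.comp hvmeas).aestronglyMeasurable)]
  have hfin : 2 * (μ Ω + 2) ≠ ⊤ := by
    apply ENNReal.mul_ne_top (by norm_num)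
    exact ENNReal.add_ne_top.mpr ⟨hΩfin.ne, by norm_num⟩
  apply ENNReal.toReal_mono hfin
  -- the lintegral computation
  have heq1 : ∫⁻ x in Ω, ENNReal.ofReal (psi0 T ‖w (φ i) x‖) ∂μ
      = ∑' j : ℕ, ∫⁻ x in Ω,
          ENNReal.ofReal (min ‖w (φ i) x‖ (T (j+1)) / T (j+1)) ∂μ := by
    rw [← lintegral_tsum]
    · apply lintegral_congr
      intro x
      exact psi0_ofReal hT1 hTg (norm_nonneg _)
    · intro j
      apply Measurable.aemeasurable
      exact ((hvmeas.min measurable_const).div_const _).ennreal_ofReal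
  rw [heq1]
  have hterm : ∀ j : ℕ, (∫⁻ x in Ω,
      ENNReal.ofReal (min ‖w (φ i) x‖ (T (j+1)) / T (j+1)) ∂μ)
      ≤ (2⁻¹)^j * (μ Ω + 2) := by
    intro j
    set A : Set (EuclideanSpace ℝ (Fin d)) := {x | ‖w (φ i) x‖ ≤ T j} with hAdef
    have hAmeas : MeasurableSet A := measurableSet_le hvmeas measurable_const
    have hTp : (0:ℝ) < T (j+1) := lt_of_lt_of_le one_pos (hT1 (j+1))
    have hsplit := lintegral_add_compl
      (fun x => ENNReal.ofReal (min ‖w (φ i) x‖ (T (j+1)) / T (j+1)))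
      hAmeas (μ := μ.restrict Ω)
    rw [← hsplit]
    have hbound1 : (∫⁻ x in A, ENNReal.ofReal (min ‖w (φ i) x‖ (T (j+1)) / T (j+1))
        ∂(μ.restrict Ω)) ≤ ENNReal.ofReal (T j / T (j+1)) * μ Ω := by
      calc (∫⁻ x in A, ENNReal.ofReal (min ‖w (φ i) x‖ (T (j+1)) / T (j+1))
          ∂(μ.restrict Ω))
          ≤ ∫⁻ _ in A, ENNReal.ofReal (T j / T (j+1)) ∂(μ.restrict Ω) := by
            apply setLIntegral_mono measurable_const
            intro x hx
            apply ENNReal.ofReal_le_ofReal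
            apply div_le_div_of_nonneg_right _ hTp.le
            exact le_trans (min_le_left _ _) hx
      _ = ENNReal.ofReal (T j / T (j+1)) * (μ.restrict Ω) A := setLIntegral_const _ _
      _ ≤ ENNReal.ofReal (T j / T (j+1)) * μ Ω := by
          apply mul_le_mul_right
          rw [Measure.restrict_apply' hΩmeas]
          exact measure_mono inter_subset_right
    have hbound2 : (∫⁻ x in Aᶜ, ENNReal.ofReal (min ‖w (φ i) x‖ (T (j+1)) / T (j+1))
        ∂(μ.restrict Ω)) ≤ 2 * (2⁻¹)^j := by
      calc (∫⁻ x in Aᶜ, ENNReal.ofReal (min ‖w (φ i) x‖ (T (j+1)) / T (j+1))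
          ∂(μ.restrict Ω))
          ≤ ∫⁻ _ in Aᶜ, 1 ∂(μ.restrict Ω) := by
            apply setLIntegral_mono measurable_const
            intro x _
            rw [show (1:ℝ≥0∞) = ENNReal.ofReal 1 by simp]
            apply ENNReal.ofReal_le_ofReal
            rw [div_le_one hTp]
            exact min_le_right _ _
      _ = (μ.restrict Ω) Aᶜ := by rw [setLIntegral_const, one_mul]
      _ = μ (Aᶜ ∩ Ω) := Measure.restrict_apply' hΩmeas
      _ ≤ 2 * (2⁻¹)^j := by
          rw [inter_comm]
          have : Ω ∩ Aᶜ = Ω ∩ {x | T j < ‖w (φ i) x‖} := by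
            ext x
            simp [hAdef, not_le]
          rw [this]
          exact hmeasb i j
    have hofReal : ENNReal.ofReal (T j / T (j+1)) ≤ (2⁻¹)^j := by
      have h1 : T j / T (j+1) ≤ (2⁻¹)^j := by
        rw [div_le_iff₀ hTp]
        calc (2⁻¹:ℝ)^j * T (j+1) ≥ (2⁻¹)^j * (2^(j+1) * T j) := by
              apply mul_le_mul_of_nonneg_left (hTg j) (by positivity)
        _ = 2 * T j := by
            rw [show ((2:ℝ)⁻¹)^j * (2^(j+1) * T j) = ((2⁻¹)^j * 2^j) * (2 * T j) by ring]
            rw [← mul_pow]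
            norm_num
        _ ≥ T j := by nlinarith [hT1 j]
      calc ENNReal.ofReal (T j / T (j+1)) ≤ ENNReal.ofReal ((2⁻¹)^j) :=
            ENNReal.ofReal_le_ofReal h1
      _ = (2⁻¹)^j := by
          rw [ENNReal.ofReal_pow (by norm_num),
            ENNReal.ofReal_inv_of_pos (by norm_num : (0:ℝ) < 2)]
          simp [ENNReal.ofReal_ofNat]
    calc (∫⁻ x in A, ENNReal.ofReal (min ‖w (φ i) x‖ (T (j+1)) / T (j+1))
          ∂(μ.restrict Ω))
        + (∫⁻ x in Aᶜ, ENNReal.ofReal (min ‖w (φ i) x‖ (T (j+1)) / T (j+1))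
          ∂(μ.restrict Ω))
        ≤ ENNReal.ofReal (T j / T (j+1)) * μ Ω + 2 * (2⁻¹)^j :=
          add_le_add hbound1 hbound2
    _ ≤ (2⁻¹)^j * μ Ω + (2⁻¹)^j * 2 := by
        apply add_le_add
        · exact mul_le_mul_left hofReal _
        · rw [mul_comm]
    _ = (2⁻¹)^j * (μ Ω + 2) := by rw [mul_add]
  calc (∑' j : ℕ, ∫⁻ x in Ω,
        ENNReal.ofReal (min ‖w (φ i) x‖ (T (j+1)) / T (j+1)) ∂μ)
      ≤ ∑' j : ℕ, (2⁻¹)^j * (μ Ω + 2) := ENNReal.tsum_le_tsum hterm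
  _ = (∑' j : ℕ, ((2:ℝ≥0∞)⁻¹)^j) * (μ Ω + 2) := ENNReal.tsum_mul_right
  _ = 2 * (μ Ω + 2) := by
      rw [ENNReal.tsum_geometric, ENNReal.one_sub_inv_two, inv_inv]
end

section
/- Let N ∈ ℕ, let γ ≥ 2 be a real number, and let R₀ > 0. Then for every finite set of points {x_1, …, x_n} ⊂ ℝ^m with n ≤ N there exist M ≤ N, centers y_1, …, y_M ∈ ℝ^m and radii r_1, …, r_M such that the open balls B_{r_1}(y_1), …, B_{r_M}(y_M) are pairwise disjoint, their union contains {x_1, …, x_n}, the radii satisfy R₀ ≤ r_k ≤ (2γ)^N R₀ for every k = 1, …, M, and the centers satisfy |y_i − y_j| > γ · max_{k=1,…,M} r_k for all 1 ≤ i < j ≤ M. -/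
open Set

private theorem stmt1_aux {m : ℕ} (γ R₀ : ℝ) (hγ : 2 ≤ γ) (hR₀ : 0 < R₀)
    {n : ℕ} (x : Fin n → EuclideanSpace ℝ (Fin m)) :
    ∀ (M : ℕ) (y : Fin M → EuclideanSpace ℝ (Fin m)) (r : ℝ), R₀ ≤ r →
      (∀ k, ∃ i, x k ∈ Metric.ball (y i) r) →
      ∃ M', M' ≤ M ∧ ∃ (y' : Fin M' → EuclideanSpace ℝ (Fin m)) (r' : ℝ),
        r ≤ r' ∧ r' ≤ (2 * γ) ^ M * r ∧
        (∀ k, ∃ i, x k ∈ Metric.ball (y' i) r') ∧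
        (∀ i j : Fin M', i ≠ j → γ * r' < dist (y' i) (y' j)) := by
  have h2γ : (1:ℝ) ≤ 2 * γ := by linarith
  intro M
  induction M with
  | zero =>
    intro y r hr hcov
    exact ⟨0, le_rfl, y, r, le_rfl, by simp, hcov, fun i _ _ => i.elim0⟩
  | succ M ih =>
    intro y r hr hcov
    have hrpos : 0 < r := lt_of_lt_of_le hR₀ hr
    by_cases hsep : ∀ i j : Fin (M+1), i ≠ j → γ * r < dist (y i) (y j)
    · exact ⟨M+1, le_rfl, y, r, le_rfl,
        le_mul_of_one_le_left hrpos.le (one_le_pow₀ h2γ), hcov, hsep⟩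
    · push_neg at hsep
      obtain ⟨i, j, hij, hd⟩ := hsep
      set y'' : Fin M → EuclideanSpace ℝ (Fin m) := y ∘ j.succAbove with hy''
      have hrle : r ≤ 2 * γ * r := le_mul_of_one_le_left hrpos.le h2γ
      have hcov'' : ∀ k, ∃ i', x k ∈ Metric.ball (y'' i') (2 * γ * r) := by
        intro k
        obtain ⟨i₀, hi₀⟩ := hcov k
        by_cases h : i₀ = j
        · obtain ⟨i', hi'⟩ := Fin.exists_succAbove_eq hij
          refine ⟨i', ?_⟩
          have : dist (x k) (y i) ≤ dist (x k) (y j) + dist (y j) (y i) := dist_triangle _ _ _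
          have hxj : dist (x k) (y j) < r := by
            rw [← h]; exact Metric.mem_ball.mp hi₀
          have hji : dist (y j) (y i) ≤ γ * r := by rw [dist_comm]; exact hd
          have : dist (x k) (y i) < 2 * γ * r := by nlinarith
          simpa [hy'', hi'] using Metric.mem_ball.mpr this
        · obtain ⟨i', hi'⟩ := Fin.exists_succAbove_eq h
          exact ⟨i', by simpa [hy'', hi'] using Metric.ball_subset_ball hrle hi₀⟩
      obtain ⟨M', hM', y', r', h1, h2, h3, h4⟩ :=
        ih y'' (2 * γ * r) (hr.trans hrle) hcov''
      refine ⟨M', hM'.trans (Nat.le_succ M), y', r', hrle.trans h1, ?_, h3, h4⟩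
      calc r' ≤ (2 * γ) ^ M * (2 * γ * r) := h2
        _ = (2 * γ) ^ (M + 1) * r := by ring

/-- **Covering with balls.** Given `N ∈ ℕ`, `γ ≥ 2`, `R₀ > 0`, every set of at most `N`
points in `ℝ^m` can be covered by `M ≤ N` pairwise disjoint open balls whose radii lie in
`[R₀, (2γ)^N R₀]` and whose centers are pairwise farther apart than `γ` times the maximal
radius. -/
theorem stmt1 {m : ℕ} (N : ℕ) (γ R₀ : ℝ) (hγ : 2 ≤ γ) (hR₀ : 0 < R₀)
    (n : ℕ) (hn : n ≤ N) (x : Fin n → EuclideanSpace ℝ (Fin m)) :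
    ∃ M : ℕ, M ≤ N ∧ ∃ (y : Fin M → EuclideanSpace ℝ (Fin m)) (r : Fin M → ℝ),
      (∀ i j : Fin M, i ≠ j → Disjoint (Metric.ball (y i) (r i)) (Metric.ball (y j) (r j))) ∧
      (∀ k : Fin n, ∃ i : Fin M, x k ∈ Metric.ball (y i) (r i)) ∧
      (∀ i : Fin M, R₀ ≤ r i ∧ r i ≤ (2 * γ) ^ N * R₀) ∧
      (∀ i j : Fin M, i < j → ∀ k : Fin M, γ * r k < dist (y i) (y j)) := by
  have h2γ : (1:ℝ) ≤ 2 * γ := by linarith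
  obtain ⟨M, hM, y, r, hr1, hr2, hcov, hsep⟩ :=
    stmt1_aux γ R₀ hγ hR₀ x n x R₀ le_rfl
      (fun k => ⟨k, Metric.mem_ball_self hR₀⟩)
  have hrpos : 0 < r := lt_of_lt_of_le hR₀ hr1
  refine ⟨M, hM.trans hn, y, fun _ => r, ?_, hcov, ?_, ?_⟩
  · intro i j hij
    apply Metric.ball_disjoint_ball
    have := hsep i j hij
    nlinarith
  · intro i
    refine ⟨hr1, hr2.trans ?_⟩
    calc (2 * γ) ^ n * R₀ ≤ (2 * γ) ^ N * R₀ := by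
          apply mul_le_mul_of_nonneg_right _ hR₀.le
          exact pow_le_pow_right₀ h2γ hn
      _ = (2 * γ) ^ N * R₀ := rfl
  · intro i j hij k
    exact hsep i j (ne_of_lt hij)
end

section
/- Let μ be a finite measure on a measurable space X, let 1 < p < ∞ and C > 0, and let q ∈ ℕ. Let (f_k)_k and (g_k)_k be sequences of measurable functions X → ℝ^q with ‖f_k‖_{L^p(μ)} ≤ C and ‖g_k‖_{L^p(μ)} ≤ C for all k, and suppose μ({ x : f_k(x) ≠ g_k(x) }) → 0 as k → ∞. If f_k converges weakly in L^p(μ; ℝ^q) to f (i.e. ∫ ⟨f_k, φ⟩ dμ → ∫ ⟨f, φ⟩ dμ for every φ ∈ L^{p'}(μ; ℝ^q), where p' = p/(p−1)) and g_k converges weakly in L^p(μ; ℝ^q) to g, then f = g μ-almost everywhere. -/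
open MeasureTheory Filter Set Topology
open scoped InnerProductSpace ENNReal NNReal

/-- If two `L^p`-bounded sequences `(f_k)`, `(g_k)` differ only on sets of vanishing measure
and converge weakly in `L^p(μ; ℝ^q)` to `F` and `G` respectively, then `F = G` μ-a.e. -/
theorem stmt2 {X : Type*} [MeasurableSpace X] (μ : Measure X) [IsFiniteMeasure μ]
    (p : ℝ) (hp : 1 < p) (C : ℝ) (hC : 0 < C) (q : ℕ)
    (f g : ℕ → X → EuclideanSpace ℝ (Fin q))
    (F G : X → EuclideanSpace ℝ (Fin q))
    (hfmem : ∀ k, MemLp (f k) (ENNReal.ofReal p) μ)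
    (hgmem : ∀ k, MemLp (g k) (ENNReal.ofReal p) μ)
    (hfbd : ∀ k, eLpNorm (f k) (ENNReal.ofReal p) μ ≤ ENNReal.ofReal C)
    (hgbd : ∀ k, eLpNorm (g k) (ENNReal.ofReal p) μ ≤ ENNReal.ofReal C)
    (hFmem : MemLp F (ENNReal.ofReal p) μ) (hGmem : MemLp G (ENNReal.ofReal p) μ)
    (hdiff : Tendsto (fun k => μ {x | f k x ≠ g k x}) atTop (𝓝 0))
    (hfconv : ∀ φ : X → EuclideanSpace ℝ (Fin q),
      MemLp φ (ENNReal.ofReal (p / (p - 1))) μ →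
      Tendsto (fun k => ∫ x, ⟪f k x, φ x⟫_ℝ ∂μ) atTop (𝓝 (∫ x, ⟪F x, φ x⟫_ℝ ∂μ)))
    (hgconv : ∀ φ : X → EuclideanSpace ℝ (Fin q),
      MemLp φ (ENNReal.ofReal (p / (p - 1))) μ →
      Tendsto (fun k => ∫ x, ⟪g k x, φ x⟫_ℝ ∂μ) atTop (𝓝 (∫ x, ⟪G x, φ x⟫_ℝ ∂μ))) :
    F =ᵐ[μ] G := by
  have hp0 : (0:ℝ) < p := lt_trans one_pos hp
  set q' : ℝ := p / (p - 1) with hq'def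
  have hpq : p.HolderConjugate q' := Real.HolderConjugate.conjExponent hp
  have hq'0 : 0 < q' := hpq.symm.pos
  have hpe1 : (1 : ℝ≥0∞) ≤ ENNReal.ofReal p := by
    rw [show (1:ℝ≥0∞) = ENNReal.ofReal 1 by simp]
    exact ENNReal.ofReal_le_ofReal hp.le
  -- the test function
  set d : X → EuclideanSpace ℝ (Fin q) := fun x => F x - G x with hd
  set φ : X → EuclideanSpace ℝ (Fin q) := fun x => (1 + ‖d x‖)⁻¹ • d x with hφdef
  have hdm : AEStronglyMeasurable d μ := hFmem.1.sub hGmem.1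
  have hφm : AEStronglyMeasurable φ μ := by
    exact ((hdm.norm.aemeasurable.const_add 1).inv.aestronglyMeasurable).smul hdm
  have hφ_bd : ∀ x, ‖φ x‖ ≤ 1 := by
    intro x
    have h1 : (0:ℝ) < 1 + ‖d x‖ := by positivity
    have hn : (0:ℝ) ≤ ‖d x‖ := norm_nonneg _
    rw [hφdef, norm_smul, Real.norm_eq_abs, abs_of_pos (inv_pos.2 h1)]
    rw [inv_mul_le_iff₀ h1]
    linarith
  have hφmem : MemLp φ (ENNReal.ofReal q') μ :=
    MemLp.of_bound hφm 1 (ae_of_all _ hφ_bd)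
  -- integrability facts
  have hint : ∀ (h : X → EuclideanSpace ℝ (Fin q)), MemLp h (ENNReal.ofReal p) μ →
      Integrable (fun x => ⟪h x, φ x⟫_ℝ) μ := by
    intro h hh
    have hh1 : Integrable h μ :=
      memLp_one_iff_integrable.mp (hh.mono_exponent hpe1)
    refine Integrable.mono hh1.norm (hh.1.inner hφm) (ae_of_all _ fun x => ?_)
    calc ‖⟪h x, φ x⟫_ℝ‖ ≤ ‖h x‖ * ‖φ x‖ := norm_inner_le_norm _ _
      _ ≤ ‖h x‖ * 1 := by
          exact mul_le_mul_of_nonneg_left (hφ_bd x) (norm_nonneg _)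
      _ = ‖(fun y => ‖h y‖) x‖ := by simp
  -- key quantitative bound
  have key : ∀ k, |(∫ x, ⟪f k x, φ x⟫_ℝ ∂μ) - ∫ x, ⟪g k x, φ x⟫_ℝ ∂μ|
      ≤ 2 * C * ((μ {x | f k x ≠ g k x}).toReal) ^ (1/q') := by
    intro k
    set A : Set X := {x | f k x ≠ g k x} with hA
    set B : Set X := toMeasurable μ A with hB
    have hAB : A ⊆ B := subset_toMeasurable μ A
    have hμB : μ B = μ A := measure_toMeasurable A
    have hsub : AEStronglyMeasurable (fun x => f k x - g k x) μ := (hfmem k).1.sub (hgmem k).1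
    have h1 : (∫ x, ⟪f k x, φ x⟫_ℝ ∂μ) - ∫ x, ⟪g k x, φ x⟫_ℝ ∂μ
        = ∫ x, ⟪f k x - g k x, φ x⟫_ℝ ∂μ := by
      rw [← integral_sub (hint _ (hfmem k)) (hint _ (hgmem k))]
      simp [inner_sub_left]
    rw [h1]
    have hIm : AEStronglyMeasurable (fun x => ⟪f k x - g k x, φ x⟫_ℝ) μ := hsub.inner hφm
    have h2 : ‖∫ x, ⟪f k x - g k x, φ x⟫_ℝ ∂μ‖ ≤ ∫ x, ‖⟪f k x - g k x, φ x⟫_ℝ‖ ∂μ :=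
      norm_integral_le_integral_norm _
    have h3 : ∫ x, ‖⟪f k x - g k x, φ x⟫_ℝ‖ ∂μ
        = (∫⁻ x, ‖⟪f k x - g k x, φ x⟫_ℝ‖₊ ∂μ).toReal :=
      integral_norm_eq_lintegral_enorm hIm
    -- pointwise bound in ℝ≥0∞
    have hpt : ∀ x, (‖⟪f k x - g k x, φ x⟫_ℝ‖₊ : ℝ≥0∞)
        ≤ (‖f k x - g k x‖₊ : ℝ≥0∞) * B.indicator 1 x := by
      intro x
      by_cases hx : x ∈ A
      · have hxB : x ∈ B := hAB hx
        simp only [Set.indicator_of_mem hxB, Pi.one_apply, mul_one]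
        rw [ENNReal.coe_le_coe, ← NNReal.coe_le_coe, coe_nnnorm, coe_nnnorm]
        calc ‖⟪f k x - g k x, φ x⟫_ℝ‖ ≤ ‖f k x - g k x‖ * ‖φ x‖ := norm_inner_le_norm _ _
          _ ≤ ‖f k x - g k x‖ * 1 :=
              mul_le_mul_of_nonneg_left (hφ_bd x) (norm_nonneg _)
          _ = ‖f k x - g k x‖ := mul_one _
      · have hfg : f k x = g k x := not_not.mp hx
        simp [hfg]
    -- Hölder
    have hmeas1 : AEMeasurable (fun x => (‖f k x - g k x‖₊ : ℝ≥0∞)) μ := hsub.enorm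
    have hmeas2 : AEMeasurable (fun x => B.indicator (1 : X → ℝ≥0∞) x) μ :=
      (measurable_one.indicator (measurableSet_toMeasurable μ A)).aemeasurable
    have hhold := ENNReal.lintegral_mul_le_Lp_mul_Lq μ hpq hmeas1 hmeas2
    have hLp : (∫⁻ x, (‖f k x - g k x‖₊ : ℝ≥0∞) ^ p ∂μ) ^ (1/p)
        ≤ ENNReal.ofReal (2*C) := by
      have := eLpNorm_eq_lintegral_rpow_enorm_toReal (f := fun x => f k x - g k x)
        (μ := μ) (p := ENNReal.ofReal p)
        (by simp [ENNReal.ofReal_eq_zero, not_le, hp0]) ENNReal.ofReal_ne_top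
      rw [ENNReal.toReal_ofReal hp0.le] at this
      refine this.symm.trans_le ?_
      calc eLpNorm (fun x => f k x - g k x) (ENNReal.ofReal p) μ
          ≤ eLpNorm (f k) (ENNReal.ofReal p) μ + eLpNorm (g k) (ENNReal.ofReal p) μ :=
            eLpNorm_sub_le (hfmem k).1 (hgmem k).1 hpe1
        _ ≤ ENNReal.ofReal C + ENNReal.ofReal C := add_le_add (hfbd k) (hgbd k)
        _ = ENNReal.ofReal (2*C) := by rw [← ENNReal.ofReal_add hC.le hC.le]; ring_nf
    have hLq : (∫⁻ x, (B.indicator (1 : X → ℝ≥0∞) x) ^ q' ∂μ) ^ (1/q') = (μ A) ^ (1/q') := by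
      have hind : ∀ x, (B.indicator (1 : X → ℝ≥0∞) x) ^ q' = B.indicator 1 x := by
        intro x
        by_cases hx : x ∈ B
        · simp [Set.indicator_of_mem hx]
        · simp [Set.indicator_of_notMem hx, ENNReal.zero_rpow_of_pos hq'0]
      rw [lintegral_congr hind, lintegral_indicator_one (measurableSet_toMeasurable μ A), hμB]
    have hchain : (∫⁻ x, ‖⟪f k x - g k x, φ x⟫_ℝ‖₊ ∂μ)
        ≤ ENNReal.ofReal (2*C) * (μ A) ^ (1/q') := by
      calc (∫⁻ x, ‖⟪f k x - g k x, φ x⟫_ℝ‖₊ ∂μ)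
          ≤ ∫⁻ x, (‖f k x - g k x‖₊ : ℝ≥0∞) * B.indicator 1 x ∂μ := lintegral_mono hpt
        _ ≤ (∫⁻ x, (‖f k x - g k x‖₊ : ℝ≥0∞) ^ p ∂μ) ^ (1/p)
            * (∫⁻ x, (B.indicator (1 : X → ℝ≥0∞) x) ^ q' ∂μ) ^ (1/q') := hhold
        _ ≤ ENNReal.ofReal (2*C) * (μ A) ^ (1/q') := by
            rw [hLq]; exact mul_le_mul_left hLp _
    have hfin : ENNReal.ofReal (2*C) * (μ A) ^ (1/q') ≠ ∞ := by
      apply ENNReal.mul_ne_top ENNReal.ofReal_ne_top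
      exact ENNReal.rpow_ne_top_of_nonneg (by positivity) (measure_ne_top μ A)
    calc |∫ x, ⟪f k x - g k x, φ x⟫_ℝ ∂μ|
        = ‖∫ x, ⟪f k x - g k x, φ x⟫_ℝ ∂μ‖ := (Real.norm_eq_abs _).symm
      _ ≤ (∫⁻ x, ‖⟪f k x - g k x, φ x⟫_ℝ‖₊ ∂μ).toReal := by rw [← h3]; exact h2
      _ ≤ (ENNReal.ofReal (2*C) * (μ A) ^ (1/q')).toReal := ENNReal.toReal_mono hfin hchain
      _ = 2 * C * ((μ A).toReal) ^ (1/q') := by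
          rw [ENNReal.toReal_mul, ENNReal.toReal_ofReal (by positivity), ENNReal.toReal_rpow]
  -- the bound tends to 0
  have hbd0 : Tendsto (fun k => 2 * C * ((μ {x | f k x ≠ g k x}).toReal) ^ (1/q'))
      atTop (𝓝 0) := by
    have h1 : Tendsto (fun k => (μ {x | f k x ≠ g k x}).toReal) atTop (𝓝 0) := by
      have := (ENNReal.tendsto_toReal (by simp : (0:ℝ≥0∞) ≠ ∞)).comp hdiff
      simpa [Function.comp_def] using this
    have h2 : Tendsto (fun k => ((μ {x | f k x ≠ g k x}).toReal) ^ (1/q')) atTop (𝓝 0) := by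
      have hc : ContinuousAt (fun t : ℝ => t ^ (1/q')) 0 :=
        Real.continuousAt_rpow_const 0 (1/q') (Or.inr (by positivity))
      have := hc.tendsto.comp h1
      simpa [Function.comp_def, one_div, Real.zero_rpow (by positivity : q'⁻¹ ≠ 0)] using this
    simpa using h2.const_mul (2*C)
  -- hence the difference of integrals tends to 0
  have hzero : Tendsto
      (fun k => (∫ x, ⟪f k x, φ x⟫_ℝ ∂μ) - ∫ x, ⟪g k x, φ x⟫_ℝ ∂μ) atTop (𝓝 0) :=
    squeeze_zero_norm key hbd0
  have hlim : Tendsto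
      (fun k => (∫ x, ⟪f k x, φ x⟫_ℝ ∂μ) - ∫ x, ⟪g k x, φ x⟫_ℝ ∂μ) atTop
      (𝓝 ((∫ x, ⟪F x, φ x⟫_ℝ ∂μ) - ∫ x, ⟪G x, φ x⟫_ℝ ∂μ)) :=
    (hfconv φ hφmem).sub (hgconv φ hφmem)
  have heq : (∫ x, ⟪F x, φ x⟫_ℝ ∂μ) - ∫ x, ⟪G x, φ x⟫_ℝ ∂μ = 0 :=
    tendsto_nhds_unique hlim hzero
  have hint0 : ∫ x, ⟪d x, φ x⟫_ℝ ∂μ = 0 := by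
    rw [show (fun x => ⟪d x, φ x⟫_ℝ) = fun x => ⟪F x, φ x⟫_ℝ - ⟪G x, φ x⟫_ℝ by
      funext x; simp [hd, inner_sub_left]]
    rw [integral_sub (hint _ hFmem) (hint _ hGmem)]
    exact heq
  -- derive a.e. equality
  have hdmem : MemLp d (ENNReal.ofReal p) μ := hFmem.sub hGmem
  have hinner_int : Integrable (fun x => ⟪d x, φ x⟫_ℝ) μ := hint _ hdmem
  have hae : (fun x => ⟪d x, φ x⟫_ℝ) =ᵐ[μ] 0 := by
    rw [← integral_eq_zero_iff_of_nonneg_ae ?_ hinner_int]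
    · exact hint0
    · refine ae_of_all _ fun x => ?_
      have h1 : (0:ℝ) < 1 + ‖d x‖ := by positivity
      simp only [hφdef, Pi.zero_apply, real_inner_smul_right]
      have : ⟪d x, d x⟫_ℝ = ‖d x‖ ^ 2 := real_inner_self_eq_norm_sq _
      rw [this]
      positivity
  filter_upwards [hae] with x hx
  have h1 : (0:ℝ) < 1 + ‖d x‖ := by positivity
  have hx' : (1 + ‖d x‖)⁻¹ * ‖d x‖ ^ 2 = 0 := by
    have : ⟪d x, φ x⟫_ℝ = (1 + ‖d x‖)⁻¹ * ‖d x‖ ^ 2 := by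
      simp only [hφdef]
      rw [real_inner_smul_right, real_inner_self_eq_norm_sq]
    rw [← this]; exact hx
  have hnd : ‖d x‖ = 0 := by
    have hinv : (0:ℝ) < (1 + ‖d x‖)⁻¹ := inv_pos.2 h1
    have h2 : ‖d x‖ ^ 2 = 0 := by
      rcases mul_eq_zero.mp hx' with h | h
      · exact absurd h hinv.ne'
      · exact h
    exact pow_eq_zero_iff two_ne_zero |>.mp h2
  have hd0 : F x - G x = 0 := norm_eq_zero.mp hnd
  exact sub_eq_zero.mp hd0
end

section
/- Let (X, μ) be a finite measure space, q ∈ ℕ, and C ≥ 0. For each m ∈ ℕ let (P_j^m)_{j ≥ 0} be a countable measurable partition of X (i.e. the sets P_j^m, j = 0,1,2,…, are pairwise disjoint, measurable, and cover X) with μ(P_0^m) ≤ C · 2^{−m}, and assume ∑_{j ≥ 0} μ(P_j^{m+1} △ P_j^m) ≤ 3 · 2^{−m} for every m. Let (t_j^m)_{j ≥ 1} ⊂ ℝ^q be vectors satisfying: t_j^{m+1} = t_j^m whenever μ(P_j^{m+1} ∩ P_j^m) > 0 (for every j ≥ 1 and m). Let u, h : X → ℝ^q be measurable and define v^m := h·χ_{P_0^m}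 + ∑_{j ≥ 1} (u − t_j^m)·χ_{P_j^m}. Then for all n ≤ l one has μ( X ∖ ⋂_{n ≤ m ≤ l} { x ∈ X : v^m(x) = v^n(x) } ) ≤ (3C + 6) · 2^{−n}. -/
open MeasureTheory Filter Set Function

lemma geom_ico_eq (n : ℕ) : ∀ l, n ≤ l →
    ∑ m ∈ Finset.Ico n l, ((1:ℝ)/2) ^ m = 2 * (1/2) ^ n - 2 * (1/2) ^ l := by
  intro l hl
  induction l, hl using Nat.le_induction with
  | base => simp
  | succ k hk ih =>
    rw [Finset.sum_Ico_succ_top hk, ih]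
    ring

lemma geom_ico_bound {n l : ℕ} (hl : n ≤ l) :
    ∑ m ∈ Finset.Ico n l, ((1:ℝ)/2) ^ m ≤ 2 * (1/2) ^ n := by
  rw [geom_ico_eq n l hl]
  have : (0:ℝ) ≤ 2 * (1/2) ^ l := by positivity
  linarith


/-- **Step 4 stability estimate.** For partitions `(P_j^m)_{j≥0}` of `X` with small rest sets
`P_0^m` and dyadically small symmetric differences, and translations `t_j^m` that are kept
fixed on overlapping components, the piecewise translated functions
`v^m = h χ_{P_0^m} + Σ_{j≥1} (u - t_j^m) χ_{P_j^m}` satisfy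
`μ(X ∖ ⋂_{n ≤ m ≤ l} {v^m = v^n}) ≤ (3C + 6) 2^{-n}`. -/
theorem stmt3 {X : Type*} [MeasurableSpace X] (μ : Measure X) [IsFiniteMeasure μ]
    (q : ℕ) (C : ℝ) (hC : 0 ≤ C)
    (P : ℕ → ℕ → Set X)
    (hmeas : ∀ m j, MeasurableSet (P m j))
    (hdisj : ∀ m, Pairwise (Disjoint on (P m)))
    (hcover : ∀ m, ⋃ j, P m j = Set.univ)
    (hP0 : ∀ m, μ (P m 0) ≤ ENNReal.ofReal (C * (1 / 2) ^ m))
    (hΔ : ∀ m, ∑' j, μ (symmDiff (P (m + 1) j) (P m j)) ≤ ENNReal.ofReal (3 * (1 / 2) ^ m))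
    (t : ℕ → ℕ → EuclideanSpace ℝ (Fin q))
    (ht : ∀ m, ∀ j ≥ 1, 0 < μ (P (m + 1) j ∩ P m j) → t (m + 1) j = t m j)
    (u h : X → EuclideanSpace ℝ (Fin q))
    (v : ℕ → X → EuclideanSpace ℝ (Fin q))
    (hv0 : ∀ m, ∀ x ∈ P m 0, v m x = h x)
    (hvj : ∀ m, ∀ j ≥ 1, ∀ x ∈ P m j, v m x = u x - t m j) :
    ∀ n l, n ≤ l →
      μ (Set.univ \ ⋂ m ∈ Set.Icc n l, {x | v m x = v n x}) ≤
        ENNReal.ofReal ((3 * C + 6) * (1 / 2) ^ n) := by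
  intro n l hnl
  -- per-step bound
  have key : ∀ m, μ {x | v (m+1) x ≠ v m x}
      ≤ ENNReal.ofReal ((3*C/2 + 3) * (1/2)^m) := by
    intro m
    set N : ℕ → Set X := fun j =>
      if μ (P (m+1) j ∩ P m j) = 0 then P (m+1) j ∩ P m j else ∅ with hN
    have hNnull : ∀ j, μ (N j) = 0 := by
      intro j
      by_cases hc : μ (P (m+1) j ∩ P m j) = 0
      · simp [hN, hc]
      · simp [hN, hc]
    have hsub : {x | v (m+1) x ≠ v m x} ⊆
        P (m+1) 0 ∪ P m 0 ∪ (⋃ j, symmDiff (P (m+1) j) (P m j)) ∪ ⋃ j, N j := by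
      intro x hx
      obtain ⟨j, hj⟩ : ∃ j, x ∈ P (m+1) j := by
        have := (hcover (m+1)).symm ▸ Set.mem_univ x
        exact Set.mem_iUnion.mp this
      obtain ⟨k, hk⟩ : ∃ k, x ∈ P m k := by
        have := (hcover m).symm ▸ Set.mem_univ x
        exact Set.mem_iUnion.mp this
      rcases Nat.eq_zero_or_pos j with hj0 | hj1
      · exact Or.inl (Or.inl (Or.inl (hj0 ▸ hj)))
      rcases Nat.eq_zero_or_pos k with hk0 | hk1
      · exact Or.inl (Or.inl (Or.inr (hk0 ▸ hk)))
      by_cases hjk : j = k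
      · subst hjk
        by_cases hpos : 0 < μ (P (m+1) j ∩ P m j)
        · exfalso
          apply hx
          rw [hvj (m+1) j hj1 x hj, hvj m j hj1 x hk, ht m j hj1 hpos]
        · refine Or.inr (Set.mem_iUnion.mpr ⟨j, ?_⟩)
          have : μ (P (m+1) j ∩ P m j) = 0 := by
            by_contra hne
            exact hpos (pos_iff_ne_zero.mpr hne)
          simp [hN, this]
          exact ⟨hj, hk⟩
      · refine Or.inl (Or.inr (Set.mem_iUnion.mpr ⟨j, ?_⟩))
        have hxnot : x ∉ P m j := fun hmem =>
          (hdisj m hjk).ne_of_mem hmem hk rfl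
        exact Set.mem_symmDiff.mpr (Or.inl ⟨hj, hxnot⟩)
    calc μ {x | v (m+1) x ≠ v m x}
        ≤ μ (P (m+1) 0 ∪ P m 0 ∪ (⋃ j, symmDiff (P (m+1) j) (P m j)) ∪ ⋃ j, N j) :=
          measure_mono hsub
      _ ≤ μ (P (m+1) 0 ∪ P m 0 ∪ (⋃ j, symmDiff (P (m+1) j) (P m j))) + μ (⋃ j, N j) :=
          measure_union_le _ _
      _ = μ (P (m+1) 0 ∪ P m 0 ∪ (⋃ j, symmDiff (P (m+1) j) (P m j))) := by
          rw [measure_iUnion_null hNnull, add_zero]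
      _ ≤ μ (P (m+1) 0 ∪ P m 0) + μ (⋃ j, symmDiff (P (m+1) j) (P m j)) :=
          measure_union_le _ _
      _ ≤ (μ (P (m+1) 0) + μ (P m 0)) + ∑' j, μ (symmDiff (P (m+1) j) (P m j)) :=
          add_le_add (measure_union_le _ _) (measure_iUnion_le _)
      _ ≤ (ENNReal.ofReal (C * (1/2)^(m+1)) + ENNReal.ofReal (C * (1/2)^m))
            + ENNReal.ofReal (3 * (1/2)^m) :=
          add_le_add (add_le_add (hP0 (m+1)) (hP0 m)) (hΔ m)
      _ = ENNReal.ofReal (C * (1/2)^(m+1) + C * (1/2)^m + 3 * (1/2)^m) := by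
          rw [← ENNReal.ofReal_add (by positivity) (by positivity),
              ← ENNReal.ofReal_add (by positivity) (by positivity)]
      _ = ENNReal.ofReal ((3*C/2 + 3) * (1/2)^m) := by
          congr 1; ring
  -- chain containment
  have hchain : Set.univ \ ⋂ m ∈ Set.Icc n l, {x | v m x = v n x} ⊆
      ⋃ m ∈ Finset.Ico n l, {x | v (m+1) x ≠ v m x} := by
    intro x hx
    by_contra hcon
    apply hx.2
    simp only [Set.mem_iUnion, not_exists, Set.mem_setOf_eq, not_not,
      Finset.mem_Ico, exists_prop] at hcon
    have hcon' : ∀ k, n ≤ k → k < l → v (k+1) x = v k x := by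
      intro k h1 h2
      by_contra hne
      exact hcon k ⟨⟨h1, h2⟩, hne⟩
    have step : ∀ m, n ≤ m → m ≤ l → v m x = v n x := by
      intro m hm
      induction m, hm using Nat.le_induction with
      | base => intro _; rfl
      | succ k hk ih =>
        intro hkl
        rw [hcon' k hk hkl]
        exact ih (le_of_lt hkl)
    exact Set.mem_iInter₂.mpr fun m hm => step m hm.1 hm.2
  calc μ (Set.univ \ ⋂ m ∈ Set.Icc n l, {x | v m x = v n x})
      ≤ μ (⋃ m ∈ Finset.Ico n l, {x | v (m+1) x ≠ v m x}) := measure_mono hchain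
    _ ≤ ∑ m ∈ Finset.Ico n l, μ {x | v (m+1) x ≠ v m x} := measure_biUnion_finset_le _ _
    _ ≤ ∑ m ∈ Finset.Ico n l, ENNReal.ofReal ((3*C/2 + 3) * (1/2)^m) :=
        Finset.sum_le_sum fun m _ => key m
    _ = ENNReal.ofReal (∑ m ∈ Finset.Ico n l, (3*C/2 + 3) * (1/2)^m) := by
        rw [ENNReal.ofReal_sum_of_nonneg fun m _ => by positivity]
    _ ≤ ENNReal.ofReal ((3 * C + 6) * (1 / 2) ^ n) := by
        apply ENNReal.ofReal_le_ofReal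
        rw [← Finset.mul_sum]
        have hg := geom_ico_bound hnl
        have h1 : (0:ℝ) ≤ 3*C/2 + 3 := by positivity
        nlinarith [hg, h1]
end

section
/- Let (X, μ) be a finite measure space, q ∈ ℕ, and c ≥ 0. For each l ∈ ℕ let v^l : X → ℝ^q be measurable, and let (v^l_k)_k be measurable functions X → ℝ^q with v^l_k → v^l in measure as k → ∞ (for each fixed l). Suppose that for all natural numbers n ≤ l ≤ k one has μ( X ∖ ⋂_{n ≤ m ≤ l} { x ∈ X : v^m_k(x) = v^n_k(x) } ) ≤ c · 2^{−n}. Then μ( ⋂_{n ∈ ℕ} ⋃_{m ≥ n} { x ∈ X : |v^m(x) − v^n(x)| > 1 } ) = 0. -/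
open MeasureTheory Filter Set Topology

/-- **Step 4 deduction.** If `w^m_k → v^m` in measure for each `m`, and for all `n ≤ l ≤ k`
one has `μ(X ∖ ⋂_{n ≤ m ≤ l} {w^m_k = w^n_k}) ≤ c 2^{-n}`, then the limit functions satisfy
`μ(⋂_n ⋃_{m ≥ n} {|v^m - v^n| > 1}) = 0`. -/
theorem stmt4 {X : Type*} [MeasurableSpace X] (μ : Measure X) [IsFiniteMeasure μ]
    (q : ℕ) (c : ℝ) (hc : 0 ≤ c)
    (v : ℕ → X → EuclideanSpace ℝ (Fin q))
    (w : ℕ → ℕ → X → EuclideanSpace ℝ (Fin q))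
    (hconv : ∀ l, ∀ ε > (0:ℝ),
      Tendsto (fun k => μ {x | ε < ‖w l k x - v l x‖}) atTop (𝓝 0))
    (hcauchy : ∀ n l k, n ≤ l → l ≤ k →
      μ (Set.univ \ ⋂ m ∈ Set.Icc n l, {x | w m k x = w n k x}) ≤
        ENNReal.ofReal (c * (1 / 2) ^ n)) :
    μ (⋂ n, ⋃ m ∈ Set.Ici n, {x | 1 < ‖v m x - v n x‖}) = 0 := by
  set A : ℕ → ℕ → Set X := fun n m => {x | 1 < ‖v m x - v n x‖} with hA
  -- key bound for finite unions
  have key : ∀ n l, n ≤ l → μ (⋃ m ∈ Set.Icc n l, A n m) ≤ ENNReal.ofReal (c * (1/2)^n) := by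
    intro n l hnl
    have hsub : ∀ k, l ≤ k →
        μ (⋃ m ∈ Set.Icc n l, A n m) ≤
          (∑ m ∈ Finset.Icc n l, μ {x | (1:ℝ)/2 < ‖w m k x - v m x‖}) +
            ENNReal.ofReal (c * (1/2)^n) := by
      intro k hk
      have hsub' : (⋃ m ∈ Set.Icc n l, A n m) ⊆
          (⋃ m ∈ Finset.Icc n l, {x | (1:ℝ)/2 < ‖w m k x - v m x‖}) ∪
            (Set.univ \ ⋂ m ∈ Set.Icc n l, {x | w m k x = w n k x}) := by
        intro x hx
        simp only [Set.mem_iUnion, exists_prop] at hx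
        obtain ⟨m, hm, hxm⟩ := hx
        by_cases hr : x ∈ ⋂ m ∈ Set.Icc n l, {x | w m k x = w n k x}
        · left
          simp only [Set.mem_iUnion, exists_prop, Finset.mem_coe, Finset.mem_Icc]
          by_cases h1 : (1:ℝ)/2 < ‖w m k x - v m x‖
          · exact ⟨m, by simpa [Finset.mem_Icc] using hm, h1⟩
          · by_cases h2 : (1:ℝ)/2 < ‖w n k x - v n x‖
            · exact ⟨n, by simp [hnl], h2⟩
            · exfalso
              push_neg at h1 h2
              simp only [Set.mem_iInter, Set.mem_setOf_eq] at hr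
              have heq : w m k x = w n k x := hr m hm
              have : v m x - v n x = (v m x - w m k x) + (w n k x - v n x) := by
                rw [heq]; abel
              have hle : ‖v m x - v n x‖ ≤ 1 := by
                rw [this]
                calc ‖(v m x - w m k x) + (w n k x - v n x)‖
                    ≤ ‖v m x - w m k x‖ + ‖w n k x - v n x‖ := norm_add_le _ _
                  _ ≤ 1/2 + 1/2 := by
                      have h1' : ‖v m x - w m k x‖ ≤ 1/2 := by
                        rw [norm_sub_rev]; exact h1
                      gcongr
                  _ = 1 := by norm_num
              exact absurd hxm (by simp only [hA, Set.mem_setOf_eq] at *; linarith)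
        · exact Or.inr ⟨Set.mem_univ x, hr⟩
      calc μ (⋃ m ∈ Set.Icc n l, A n m)
          ≤ μ ((⋃ m ∈ Finset.Icc n l, {x | (1:ℝ)/2 < ‖w m k x - v m x‖}) ∪
              (Set.univ \ ⋂ m ∈ Set.Icc n l, {x | w m k x = w n k x})) := measure_mono hsub'
        _ ≤ μ (⋃ m ∈ Finset.Icc n l, {x | (1:ℝ)/2 < ‖w m k x - v m x‖}) +
              μ (Set.univ \ ⋂ m ∈ Set.Icc n l, {x | w m k x = w n k x}) := measure_union_le _ _
        _ ≤ (∑ m ∈ Finset.Icc n l, μ {x | (1:ℝ)/2 < ‖w m k x - v m x‖}) +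
              ENNReal.ofReal (c * (1/2)^n) := by
            gcongr
            · exact measure_biUnion_finset_le _ _
            · exact hcauchy n l k hnl hk
    have htend : Tendsto (fun k => (∑ m ∈ Finset.Icc n l, μ {x | (1:ℝ)/2 < ‖w m k x - v m x‖}) +
        ENNReal.ofReal (c * (1/2)^n)) atTop (𝓝 (0 + ENNReal.ofReal (c * (1/2)^n))) := by
      refine Tendsto.add ?_ tendsto_const_nhds
      have : Tendsto (fun k => ∑ m ∈ Finset.Icc n l, μ {x | (1:ℝ)/2 < ‖w m k x - v m x‖})
          atTop (𝓝 (∑ m ∈ Finset.Icc n l, 0)) :=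
        tendsto_finset_sum _ (fun m _ => hconv m (1/2) (by norm_num))
      simpa using this
    rw [zero_add] at htend
    exact ge_of_tendsto htend (eventually_atTop.mpr ⟨l, hsub⟩)
  -- bound for infinite unions
  have key2 : ∀ n, μ (⋃ m ∈ Set.Ici n, A n m) ≤ ENNReal.ofReal (c * (1/2)^n) := by
    intro n
    have hUn : (⋃ m ∈ Set.Ici n, A n m) = ⋃ j : ℕ, ⋃ m ∈ Set.Icc n (n + j), A n m := by
      ext x
      simp only [Set.mem_iUnion, exists_prop, Set.mem_Ici, Set.mem_Icc]
      constructor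
      · rintro ⟨m, hm, hx⟩; exact ⟨m, m, ⟨hm, by omega⟩, hx⟩
      · rintro ⟨j, m, ⟨h1, h2⟩, hx⟩; exact ⟨m, h1, hx⟩
    rw [hUn]
    have hmono : Monotone (fun j : ℕ => ⋃ m ∈ Set.Icc n (n + j), A n m) := by
      intro a b hab
      refine Set.iUnion₂_mono' fun m hm => ⟨m, ?_, subset_rfl⟩
      exact Set.Icc_subset_Icc le_rfl (by omega) hm
    rw [(Monotone.directed_le hmono).measure_iUnion]
    exact iSup_le fun j => key n (n + j) (by omega)
  -- conclude
  have hbd : ∀ n, μ (⋂ n, ⋃ m ∈ Set.Ici n, A n m) ≤ ENNReal.ofReal (c * (1/2)^n) :=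
    fun n => le_trans (measure_mono (Set.iInter_subset _ n)) (key2 n)
  have htend0 : Tendsto (fun n : ℕ => ENNReal.ofReal (c * (1/2)^n)) atTop (𝓝 0) := by
    have : Tendsto (fun n : ℕ => c * (1/2:ℝ)^n) atTop (𝓝 (c * 0)) :=
      tendsto_const_nhds.mul (tendsto_pow_atTop_nhds_zero_of_lt_one (by norm_num) (by norm_num))
    rw [mul_zero] at this
    simpa using (ENNReal.tendsto_ofReal this)
  have := ge_of_tendsto htend0 (Eventually.of_forall hbd)
  exact le_antisymm this zero_le
end
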